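/- Let A be an associative algebra with an element eu such that ad(eu) acts locally finitely, and let M be a topological A-module. Define M^♡ ⊂ M to be the set of elements expressible as finite sums Σ_a Σ_{i≥0} m_{a,i} where (eu − a − i)^{N_a} m_{a,i} = 0 for some N_a, and Σ_i m_{a,i} converges. Then M^♡ is an A-submodule of M, provided each x ∈ A satisfies [eu, x] = d(x)·x for a grading d with integer values (i.e., A is generated by ad(eu)-eigenvectors with integer eigenvalues). -/
import Mathlib


/-- The set `M^♡` of elements of a topological module `M` expressible as finite sums
`Σ_a Σ_{i≥0} m_{a,i}` of generalized `eu`-eigenvectors with eigenvalues `a + i`, where each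
series `Σ_i m_{a,i}` converges. -/
def heartSet (A : Type*) [Ring A] [Algebra ℂ A]
    (M : Type*) [AddCommGroup M] [Module A M] [TopologicalSpace M] (eu : A) : Set M :=
  {m | ∃ (T : Finset ℂ) (f : ℂ → ℕ → M) (g : ℂ → M),
    (∀ a ∈ T, ∃ N : ℕ, ∀ i : ℕ, ((eu - algebraMap ℂ A (a + i)) ^ N) • f a i = 0) ∧
    (∀ a ∈ T, Filter.Tendsto (fun n => ∑ i ∈ Finset.range n, f a i)
      Filter.atTop (nhds (g a))) ∧
    m = ∑ a ∈ T, g a}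

section aux

set_option linter.unusedSectionVars false
variable {A : Type*} [Ring A] [Algebra ℂ A]
    {M : Type*} [AddCommGroup M] [Module A M] [TopologicalSpace M]

lemma heart_pow_smul_mono {p : A} {v : M} {N K : ℕ} (h : N ≤ K) (hv : p ^ N • v = 0) :
    p ^ K • v = 0 := by
  obtain ⟨j, rfl⟩ := Nat.exists_eq_add_of_le h
  rw [Nat.add_comm, pow_add, mul_smul, hv, smul_zero]

lemma heart_zero_mem (eu : A) : (0 : M) ∈ heartSet A M eu :=
  ⟨∅, fun _ _ => 0, fun _ => 0, by simp, by simp [tendsto_const_nhds], by simp⟩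

lemma heart_add_mem [ContinuousAdd M] (eu : A) {m m' : M}
    (hm : m ∈ heartSet A M eu) (hm' : m' ∈ heartSet A M eu) :
    m + m' ∈ heartSet A M eu := by
  obtain ⟨T₁, f₁, g₁, hf₁, hc₁, rfl⟩ := hm
  obtain ⟨T₂, f₂, g₂, hf₂, hc₂, rfl⟩ := hm'
  refine ⟨T₁ ∪ T₂,
    fun a i => (if a ∈ T₁ then f₁ a i else 0) + (if a ∈ T₂ then f₂ a i else 0),
    fun a => (if a ∈ T₁ then g₁ a else 0) + (if a ∈ T₂ then g₂ a else 0), ?_, ?_, ?_⟩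
  · intro a _
    have h₁ : ∃ N : ℕ, ∀ i : ℕ,
        ((eu - algebraMap ℂ A (a + i)) ^ N) • (if a ∈ T₁ then f₁ a i else 0) = 0 := by
      by_cases ha : a ∈ T₁
      · obtain ⟨N, hN⟩ := hf₁ a ha
        exact ⟨N, fun i => by rw [if_pos ha]; exact hN i⟩
      · exact ⟨0, fun i => by rw [if_neg ha]; simp⟩
    have h₂ : ∃ N : ℕ, ∀ i : ℕ,
        ((eu - algebraMap ℂ A (a + i)) ^ N) • (if a ∈ T₂ then f₂ a i else 0) = 0 := by
      by_cases ha : a ∈ T₂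
      · obtain ⟨N, hN⟩ := hf₂ a ha
        exact ⟨N, fun i => by rw [if_pos ha]; exact hN i⟩
      · exact ⟨0, fun i => by rw [if_neg ha]; simp⟩
    obtain ⟨N₁, hN₁⟩ := h₁
    obtain ⟨N₂, hN₂⟩ := h₂
    refine ⟨max N₁ N₂, fun i => ?_⟩
    rw [smul_add, heart_pow_smul_mono (le_max_left N₁ N₂) (hN₁ i),
      heart_pow_smul_mono (le_max_right N₁ N₂) (hN₂ i), add_zero]
  · intro a _
    have t₁ : Filter.Tendsto (fun n => ∑ i ∈ Finset.range n, (if a ∈ T₁ then f₁ a i else 0))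
        Filter.atTop (nhds (if a ∈ T₁ then g₁ a else 0)) := by
      by_cases ha : a ∈ T₁
      · simpa [ha] using hc₁ a ha
      · simp [ha, tendsto_const_nhds]
    have t₂ : Filter.Tendsto (fun n => ∑ i ∈ Finset.range n, (if a ∈ T₂ then f₂ a i else 0))
        Filter.atTop (nhds (if a ∈ T₂ then g₂ a else 0)) := by
      by_cases ha : a ∈ T₂
      · simpa [ha] using hc₂ a ha
      · simp [ha, tendsto_const_nhds]
    simpa [Finset.sum_add_distrib] using t₁.add t₂
  · rw [Finset.sum_add_distrib, Finset.sum_ite_mem, Finset.sum_ite_mem,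
      Finset.union_inter_cancel_left, Finset.union_inter_cancel_right]

lemma heart_comm_pow (eu y : A) (d : ℂ) (h : eu * y - y * eu = algebraMap ℂ A d * y)
    (c : ℂ) (N : ℕ) :
    (eu - algebraMap ℂ A (c + d)) ^ N * y = y * (eu - algebraMap ℂ A c) ^ N := by
  have key : (eu - algebraMap ℂ A (c + d)) * y = y * (eu - algebraMap ℂ A c) := by
    have h' : eu * y = algebraMap ℂ A d * y + y * eu := (sub_eq_iff_eq_add.mp h)
    rw [map_add, sub_mul, add_mul, mul_sub, h', Algebra.commutes c y]
    abel
  induction N with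
  | zero => simp
  | succ n ih =>
      rw [pow_succ, pow_succ, mul_assoc, key, ← mul_assoc, ih, mul_assoc]

lemma heart_smul_gen_mem [ContinuousConstSMul A M] (eu y : A) (d : ℤ)
    (hy : eu * y - y * eu = d • y) {m : M} (hm : m ∈ heartSet A M eu) :
    y • m ∈ heartSet A M eu := by
  obtain ⟨T, f, g, hf, hc, rfl⟩ := hm
  have hy' : eu * y - y * eu = algebraMap ℂ A (d : ℂ) * y := by
    rw [map_intCast, hy, zsmul_eq_mul]
  refine ⟨T.image (· + (d : ℂ)), fun b i => y • f (b - d) i, fun b => y • g (b - d), ?_, ?_, ?_⟩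
  · intro b hb
    obtain ⟨a, ha, rfl⟩ := Finset.mem_image.mp hb
    obtain ⟨N, hN⟩ := hf a ha
    refine ⟨N, fun i => ?_⟩
    dsimp only
    have hab : a + (d : ℂ) - d = a := by ring
    have hcd : a + (d : ℂ) + i = (a + i) + d := by ring
    rw [hab, hcd, ← mul_smul, heart_comm_pow eu y (d : ℂ) hy' (a + i) N, mul_smul, hN i, smul_zero]
  · intro b hb
    obtain ⟨a, ha, rfl⟩ := Finset.mem_image.mp hb
    have hab : a + (d : ℂ) - d = a := by ring
    dsimp only
    rw [hab]
    have := (hc a ha).const_smul y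
    simpa [Finset.smul_sum] using this
  · rw [Finset.sum_image (fun a _ b _ hab => by
      simpa using add_left_injective (d : ℂ) hab), ← Finset.smul_sum]
    congr 1
    exact Finset.sum_congr rfl fun x _ => by rw [add_sub_cancel_right]

lemma heart_algebraMap_smul_mem [ContinuousConstSMul A M] (eu : A) (c : ℂ) {m : M}
    (hm : m ∈ heartSet A M eu) : (algebraMap ℂ A c) • m ∈ heartSet A M eu := by
  obtain ⟨T, f, g, hf, hc, rfl⟩ := hm
  refine ⟨T, fun a i => algebraMap ℂ A c • f a i, fun a => algebraMap ℂ A c • g a, ?_, ?_, ?_⟩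
  · intro a ha
    obtain ⟨N, hN⟩ := hf a ha
    refine ⟨N, fun i => ?_⟩
    rw [← mul_smul, ← Algebra.commutes c ((eu - algebraMap ℂ A (a + i)) ^ N),
      mul_smul, hN i, smul_zero]
  · intro a ha
    have := (hc a ha).const_smul (algebraMap ℂ A c)
    simpa [Finset.smul_sum] using this
  · rw [← Finset.smul_sum]

end aux

/-- If `A` is generated by `ad(eu)`-eigenvectors with integer eigenvalues, then `M^♡` is an
`A`-submodule of the topological `A`-module `M`. -/
theorem stmt_9 (A : Type*) [Ring A] [Algebra ℂ A]
    (M : Type*) [AddCommGroup M] [Module A M] [TopologicalSpace M]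
    [ContinuousAdd M] [ContinuousConstSMul A M]
    (eu : A)
    (hgen : ∀ x : A, x ∈ Algebra.adjoin ℂ {y : A | ∃ d : ℤ, eu * y - y * eu = d • y}) :
    ∃ N : Submodule A M, (N : Set M) = heartSet A M eu := by
  have smul_mem : ∀ x : A, ∀ m ∈ heartSet A M eu, x • m ∈ heartSet A M eu := by
    intro x
    induction hgen x using Algebra.adjoin_induction with
    | mem y hy =>
        obtain ⟨d, hd⟩ := hy
        exact fun m hm => heart_smul_gen_mem eu y d hd hm
    | algebraMap r => exact fun m hm => heart_algebraMap_smul_mem eu r hm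
    | add x z hx hz ihx ihz =>
        intro m hm
        rw [add_smul]
        exact heart_add_mem eu (ihx m hm) (ihz m hm)
    | mul x z hx hz ihx ihz =>
        intro m hm
        rw [mul_smul]
        exact ihx _ (ihz m hm)
  refine ⟨{ carrier := heartSet A M eu,
            add_mem' := fun hm hm' => heart_add_mem eu hm hm',
            zero_mem' := heart_zero_mem eu,
            smul_mem' := fun x m hm => smul_mem x m hm }, rfl⟩
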